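/- Under the player's balancing strategy in the balls-in-urns game, at every round the loads of any two distinct untouched urns differ by at most 1; consequently, if N_t is the total number of balls in the u_t untouched urns, every untouched urn holds either ⌈N_t/u_t⌉ or ⌊N_t/u_t⌋ balls, and the game has ended once N_t/u_t ≥ Δ. -/

import Mathlib

lemma aux_bal {k : ℕ} (S : Finset (Fin k)) (f : Fin k → ℕ) (hne : S.Nonempty)
    (hbal : ∀ i ∈ S, ∀ j ∈ S, f i ≤ f j + 1) (Δ : ℕ) :
    (∀ i ∈ S, f i = (∑ j ∈ S, f j) / S.card ∨
        f i = ((∑ j ∈ S, f j) + S.card - 1) / S.card) ∧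
    (Δ * S.card ≤ ∑ j ∈ S, f j → ∀ i ∈ S, Δ ≤ f i) := by
  obtain ⟨i0, hi0, hmin⟩ := S.exists_min_image f hne
  set m := f i0 with hm
  set u := S.card with hu
  set N := ∑ j ∈ S, f j with hN
  have hu1 : 1 ≤ u := Finset.card_pos.mpr hne
  have hlow : u * m ≤ N := by
    have := Finset.card_nsmul_le_sum S f m (fun j hj => hmin j hj)
    simpa [smul_eq_mul] using this
  have hupper : N ≤ u * m + (u - 1) := by
    have herase : ∑ j ∈ S.erase i0, f j + f i0 = N := Finset.sum_erase_add S f hi0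
    have hcard : (S.erase i0).card = u - 1 := Finset.card_erase_of_mem hi0
    have h1 : ∑ j ∈ S.erase i0, f j ≤ (u - 1) * (m + 1) := by
      have := Finset.sum_le_card_nsmul (S.erase i0) f (m + 1)
        (fun j hj => hbal j (Finset.mem_of_mem_erase hj) i0 hi0)
      simpa [hcard, smul_eq_mul] using this
    have hum : (u - 1) * m + m = u * m := by
      have h2 : u - 1 + 1 = u := Nat.succ_pred_eq_of_pos hu1
      calc (u - 1) * m + m = (u - 1 + 1) * m := by ring
        _ = u * m := by rw [h2]
    have hexp : (u - 1) * (m + 1) = (u - 1) * m + (u - 1) := by ring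
    omega
  constructor
  · intro i hi
    have h1 : m ≤ f i := hmin i hi
    have h2 : f i ≤ m + 1 := hbal i hi i0 hi0
    rcases Nat.eq_or_lt_of_le h1 with heq | hlt
    · left
      rw [← heq]
      symm
      apply Nat.div_eq_of_lt_le
      · exact le_trans (le_of_eq (by ring)) hlow
      · calc N ≤ u * m + (u - 1) := hupper
          _ < (m + 1) * u := by
            have : (m + 1) * u = u * m + u := by ring
            omega
    · right
      have hfi : f i = m + 1 := by omega
      -- sharper lower bound on N
      have hlow2 : u * m + 1 ≤ N := by
        have herase : ∑ j ∈ S.erase i, f j + f i = N := Finset.sum_erase_add S f hi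
        have hcard : (S.erase i).card = u - 1 := Finset.card_erase_of_mem hi
        have h3 : (u - 1) * m ≤ ∑ j ∈ S.erase i, f j := by
          have := Finset.card_nsmul_le_sum (S.erase i) f m
            (fun j hj => hmin j (Finset.mem_of_mem_erase hj))
          simpa [hcard, smul_eq_mul] using this
        have hum : (u - 1) * m + m = u * m := by
          have h2' : u - 1 + 1 = u := Nat.succ_pred_eq_of_pos hu1
          calc (u - 1) * m + m = (u - 1 + 1) * m := by ring
            _ = u * m := by rw [h2']
        omega
      rw [hfi]
      symm
      apply Nat.div_eq_of_lt_le
      · have : (m + 1) * u = u * m + u := by ring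
        omega
      · have : (m + 1 + 1) * u = u * m + u + u := by ring
        omega
  · intro hΔN i hi
    have h3 : N < u * (m + 1) := by
      have : u * (m + 1) = u * m + u := by ring
      omega
    have h4 : Δ * u < (m + 1) * u := by
      have : u * (m + 1) = (m + 1) * u := by ring
      omega
    have h5 : Δ < m + 1 := Nat.lt_of_mul_lt_mul_right h4
    have := hmin i hi
    omega

lemma bal_inv (k Δ : ℕ)
    (load : ℕ → Fin k → ℕ) (a b : ℕ → Fin k)
    (hinit : ∀ i, load 0 i = 1)
    (hrule : ∀ t, (∃ i, (∀ s < t, a s ≠ i) ∧ load t i < Δ) →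
      (1 ≤ load t (a t)) ∧
      (∀ s ≤ t, a s ≠ b t) ∧
      (∀ j : Fin k, (∀ s ≤ t, a s ≠ j) → load t (b t) ≤ load t j) ∧
      (∀ i, load (t + 1) i
        = load t i - (if i = a t then 1 else 0) + (if i = b t then 1 else 0))) :
    ∀ t, (∀ s < t, ∃ i, (∀ r < s, a r ≠ i) ∧ load s i < Δ) →
      ∀ i j : Fin k, (∀ s < t, a s ≠ i) → (∀ s < t, a s ≠ j) →
        load t i ≤ load t j + 1 := by
  intro t
  induction t with
  | zero => intro _ i j _ _; simp [hinit]
  | succ t ih =>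
    intro H i j hi hj
    have Ht : ∀ s < t, ∃ i, (∀ r < s, a r ≠ i) ∧ load s i < Δ :=
      fun s hs => H s (Nat.lt_succ_of_lt hs)
    have hrun := H t (Nat.lt_succ_self t)
    obtain ⟨_, hab, hbmin, hupd⟩ := hrule t hrun
    have hit : ∀ s < t, a s ≠ i := fun s hs => hi s (Nat.lt_succ_of_lt hs)
    have hjt : ∀ s < t, a s ≠ j := fun s hs => hj s (Nat.lt_succ_of_lt hs)
    have hia : a t ≠ i := hi t (Nat.lt_succ_self t)
    have hja : a t ≠ j := hj t (Nat.lt_succ_self t)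
    have hloadi : load (t + 1) i = load t i + (if i = b t then 1 else 0) := by
      rw [hupd i, if_neg (fun h => hia h.symm)]; simp
    have hloadj : load (t + 1) j = load t j + (if j = b t then 1 else 0) := by
      rw [hupd j, if_neg (fun h => hja h.symm)]; simp
    rw [hloadi, hloadj]
    by_cases hib : i = b t
    · by_cases hjb : j = b t
      · rw [hib, hjb]; omega
      · rw [if_pos hib, if_neg hjb]
        have : load t (b t) ≤ load t j := by
          apply hbmin
          intro s hs
          rcases Nat.lt_or_ge s t with h | h
          · exact hjt s h
          · have : s = t := le_antisymm hs h
            rw [this]; exact hja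
        rw [hib]; omega
    · rw [if_neg hib]
      have := ih Ht i j hit hjt
      by_cases hjb : j = b t
      · rw [if_pos hjb]; omega
      · rw [if_neg hjb]; omega

/-- In the balls-in-urns game under the player's balancing strategy, at every round (while
the rules have been followed, i.e. as long as the game was still running at all earlier
rounds) the loads of any two untouched urns differ by at most `1`; consequently every
untouched urn holds either `⌊N/u⌋` or `⌈N/u⌉` balls, where `u` is the number of untouched
urns and `N` their total load, and the game has ended as soon as `N/u ≥ Δ`. -/
theorem balancing_invariant (k Δ : ℕ) (hk : 1 ≤ k) (hΔ : 1 ≤ Δ)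
    (load : ℕ → Fin k → ℕ) (a b : ℕ → Fin k)
    (hinit : ∀ i, load 0 i = 1)
    (hrule : ∀ t, (∃ i, (∀ s < t, a s ≠ i) ∧ load t i < Δ) →
      (1 ≤ load t (a t)) ∧
      (∀ s ≤ t, a s ≠ b t) ∧
      (∀ j : Fin k, (∀ s ≤ t, a s ≠ j) → load t (b t) ≤ load t j) ∧
      (∀ i, load (t + 1) i
        = load t i - (if i = a t then 1 else 0) + (if i = b t then 1 else 0))) :
    ∀ t, (∀ s < t, ∃ i, (∀ r < s, a r ≠ i) ∧ load s i < Δ) →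
      (∀ i j : Fin k, (∀ s < t, a s ≠ i) → (∀ s < t, a s ≠ j) →
        load t i ≤ load t j + 1) ∧
      (∀ u N : ℕ,
        u = (Finset.univ.filter fun i : Fin k => ∀ s < t, a s ≠ i).card →
        N = ∑ i ∈ Finset.univ.filter (fun i : Fin k => ∀ s < t, a s ≠ i), load t i →
        (∀ i : Fin k, (∀ s < t, a s ≠ i) →
          (load t i = N / u ∨ load t i = (N + u - 1) / u)) ∧
        (1 ≤ u → Δ * u ≤ N → ∀ i : Fin k, (∀ s < t, a s ≠ i) → Δ ≤ load t i)) := by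
  intro t H
  have hbal := bal_inv k Δ load a b hinit hrule t H
  refine ⟨hbal, ?_⟩
  intro u N hu hN
  set S := Finset.univ.filter fun i : Fin k => ∀ s < t, a s ≠ i with hS
  have hmem : ∀ i : Fin k, i ∈ S ↔ (∀ s < t, a s ≠ i) := by
    intro i; simp [hS]
  constructor
  · intro i hi
    have hiS : i ∈ S := (hmem i).mpr hi
    have hne : S.Nonempty := ⟨i, hiS⟩
    have := (aux_bal S (load t) hne
      (fun x hx y hy => hbal x y ((hmem x).mp hx) ((hmem y).mp hy)) Δ).1 i hiS
    rw [hu, hN]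
    exact this
  · intro hu1 hΔN i hi
    have hiS : i ∈ S := (hmem i).mpr hi
    have hne : S.Nonempty := ⟨i, hiS⟩
    apply (aux_bal S (load t) hne
      (fun x hx y hy => hbal x y ((hmem x).mp hx) ((hmem y).mp hy)) Δ).2
    · rw [← hu, ← hN]; exact hΔN
    · exact hiS
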